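/- For every integer N ≥ 1 and all t₁, t₂ ∈ {0, …, N−1}: Σ_{n=0}^{N−1} Complex.exp(−Complex.I · π · (2·n+1) · (t₁ − t₂) / N) / (1 − Complex.exp(Complex.I · π · (2·n+1) / N)) equals N/2 if t₂ ≤ t₁ and equals −N/2 if t₁ < t₂. (This identifies the discrete Fourier expansion, over the half-integer frequencies ω_n = (2n+1)π/N, of the step function θ_t = 1/2 for t ≥ 0 and θ_t = −1/2 for t < 0; it is the key computation giving the time-ordered two-point contraction Tr[P e^{iεP} a_{t₁ i} a†_{t₂ j}] = (δ_{ij}/2)·sgn(t₁ − t₂)·Tr[P e^{iεP}] with the convention sgn(0) = +1.) -/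

import Mathlib

open Complex Real


lemma exp_two_pi_div_eq_one {N : ℕ} (hN : 0 < N) (m : ℤ) :
    Complex.exp (2 * (Real.pi:ℂ) * Complex.I * m / N) = 1 ↔ (N:ℤ) ∣ m := by
  have hNne : (N:ℂ) ≠ 0 := Nat.cast_ne_zero.mpr hN.ne'
  have hpi : (Real.pi:ℂ) ≠ 0 := Complex.ofReal_ne_zero.mpr Real.pi_ne_zero
  have h2 : (2 * (Real.pi:ℂ) * Complex.I) ≠ 0 := by
    simp [hpi, Complex.I_ne_zero]
  rw [Complex.exp_eq_one_iff]
  constructor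
  · rintro ⟨k, hk⟩
    refine ⟨k, ?_⟩
    have h3 : (2 * (Real.pi:ℂ) * Complex.I) * m = (2 * (Real.pi:ℂ) * Complex.I) * (N * k) := by
      field_simp at hk
      linear_combination (2 * (Real.pi:ℂ) * Complex.I) * hk
    have := mul_left_cancel₀ h2 h3
    exact_mod_cast this
  · rintro ⟨k, rfl⟩
    refine ⟨k, ?_⟩
    push_cast
    field_simp

lemma sum_exp_odd_freq {N : ℕ} (hN : 0 < N) (m : ℤ) :
    ∑ n ∈ Finset.range N, Complex.exp (Complex.I * (Real.pi:ℂ) * (2*(n:ℂ)+1) * m / N) =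
      if (N:ℤ) ∣ m then ((-1:ℂ))^(m / N) * N else 0 := by
  have hNne : (N:ℂ) ≠ 0 := Nat.cast_ne_zero.mpr hN.ne'
  have hsplit : ∀ n ∈ Finset.range N,
      Complex.exp (Complex.I * (Real.pi:ℂ) * (2*(n:ℂ)+1) * m / N) =
      Complex.exp (Complex.I * (Real.pi:ℂ) * m / N) *
        (Complex.exp (2 * (Real.pi:ℂ) * Complex.I * m / N)) ^ n := by
    intro n _
    rw [← Complex.exp_nat_mul, ← Complex.exp_add]
    congr 1
    field_simp
    ring
  rw [Finset.sum_congr rfl hsplit, ← Finset.mul_sum]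
  by_cases hdvd : (N:ℤ) ∣ m
  · obtain ⟨q, rfl⟩ := hdvd
    rw [if_pos (dvd_mul_right (N:ℤ) q)]
    have hw : Complex.exp (2 * (Real.pi:ℂ) * Complex.I * ((N:ℤ)*q : ℤ) / N) = 1 :=
      (exp_two_pi_div_eq_one hN _).mpr ⟨q, rfl⟩
    rw [hw]
    simp only [one_pow, Finset.sum_const, Finset.card_range, nsmul_eq_mul, mul_one]
    have hq : ((N:ℤ) * q) / (N:ℤ) = q := by
      rw [Int.mul_ediv_cancel_left _ (by exact_mod_cast hN.ne')]
    rw [hq]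
    have harg : Complex.I * (Real.pi:ℂ) * (((N:ℤ)*q : ℤ):ℂ) / N = (q:ℤ) * ((Real.pi:ℂ) * Complex.I) := by
      push_cast
      field_simp
    rw [harg, Complex.exp_int_mul, Complex.exp_pi_mul_I]
  · rw [if_neg hdvd]
    have hw1 : Complex.exp (2 * (Real.pi:ℂ) * Complex.I * m / N) ≠ 1 := fun h =>
      hdvd ((exp_two_pi_div_eq_one hN m).mp h)
    rw [geom_sum_eq hw1, ← Complex.exp_nat_mul]
    have : ((N:ℕ):ℂ) * (2 * (Real.pi:ℂ) * Complex.I * m / N) = (m:ℤ) * (2 * (Real.pi:ℂ) * Complex.I) := by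
      field_simp
    rw [this, Complex.exp_int_mul_two_pi_mul_I]
    simp

lemma int_dvd_window {N x q : ℤ} (hN : 0 < N) (h : x = N * q) (h1 : -N < x) (h2 : x < 2*N) :
    x = 0 ∨ x = N := by
  rcases lt_trichotomy q 0 with h'|h'|h'
  · exfalso
    have hq1 : q ≤ -1 := by omega
    nlinarith
  · subst h'; simp at h; left; exact h
  · rcases (by omega : q = 1 ∨ 2 ≤ q) with h''|h''
    · subst h''; simp at h; right; exact h
    · exfalso; nlinarith

/-- Discrete Fourier expansion, over the half-integer frequencies
`ω_n = (2n+1)π/N`, of the step function `θ_t = 1/2 (t ≥ 0)`, `θ_t = −1/2 (t < 0)`: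
for `t₁, t₂ ∈ {0,…,N−1}`,
`Σ_{n<N} e^{−iπ(2n+1)(t₁−t₂)/N} / (1 − e^{iπ(2n+1)/N})` equals `N/2` if `t₂ ≤ t₁`
and `−N/2` if `t₁ < t₂`.  This is the key computation giving the time-ordered
two-point contraction `Tr[P e^{iεP} a_{t₁ i} a†_{t₂ j}]
  = (δ_{ij}/2)·sgn(t₁ − t₂)·Tr[P e^{iεP}]` with `sgn(0) = +1`. -/
theorem sum_exp_step_function (N : ℕ) (hN : 1 ≤ N) (t₁ t₂ : ℕ)
    (h₁ : t₁ ≤ N - 1) (h₂ : t₂ ≤ N - 1) :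
    ∑ n ∈ Finset.range N,
        Complex.exp (-Complex.I * (Real.pi : ℂ) * (2 * (n : ℂ) + 1) *
            (((t₁ : ℤ) - (t₂ : ℤ) : ℤ) : ℂ) / (N : ℂ)) /
          (1 - Complex.exp (Complex.I * (Real.pi : ℂ) * (2 * (n : ℂ) + 1) / (N : ℂ))) =
      if t₂ ≤ t₁ then (N : ℂ) / 2 else -((N : ℂ) / 2) := by
  have hN0 : 0 < N := hN
  have hNC : (N:ℂ) ≠ 0 := Nat.cast_ne_zero.mpr hN0.ne'
  have hNZ : (N:ℤ) ≠ 0 := by exact_mod_cast hN0.ne'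
  have hpi : (Real.pi:ℂ) ≠ 0 := Complex.ofReal_ne_zero.mpr Real.pi_ne_zero
  have ht1 : t₁ < N := by omega
  have ht2 : t₂ < N := by omega
  set t : ℤ := (t₁:ℤ) - (t₂:ℤ) with ht
  -- denominator nonzero
  have hzne : ∀ n ∈ Finset.range N,
      Complex.exp (Complex.I * (Real.pi:ℂ) * (2*(n:ℂ)+1) / N) ≠ 1 := by
    intro n _ h
    rw [Complex.exp_eq_one_iff] at h
    obtain ⟨k, hk⟩ := h
    have hpiI : ((Real.pi:ℂ) * Complex.I) ≠ 0 := mul_ne_zero hpi Complex.I_ne_zero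
    have h3 : ((Real.pi:ℂ) * Complex.I) * (2*(n:ℂ)+1) =
        ((Real.pi:ℂ) * Complex.I) * (2*(k:ℂ)*(N:ℂ)) := by
      field_simp at hk
      linear_combination ((Real.pi:ℂ) * Complex.I) * hk
    have h4 := mul_left_cancel₀ hpiI h3
    have h5 : (2*(n:ℤ)+1 : ℤ) = 2*k*N := by exact_mod_cast h4
    have h6 : (2:ℤ) ∣ 2*(n:ℤ)+1 := h5 ▸ ⟨k*N, by ring⟩
    omega
  -- per-term expansion
  have hterm : ∀ n ∈ Finset.range N,
      Complex.exp (-Complex.I * (Real.pi : ℂ) * (2 * (n : ℂ) + 1) * (t:ℂ) / (N : ℂ)) /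
          (1 - Complex.exp (Complex.I * (Real.pi : ℂ) * (2 * (n : ℂ) + 1) / (N : ℂ))) =
      ∑ k ∈ Finset.range N,
        Complex.exp (Complex.I * (Real.pi:ℂ) * (2*(n:ℂ)+1) * (((k:ℤ) - t : ℤ):ℂ) / N) / 2 := by
    intro n hn
    set z := Complex.exp (Complex.I * (Real.pi:ℂ) * (2*(n:ℂ)+1) / N) with hz
    have hz1 : z ≠ 1 := hzne n hn
    have hzden : 1 - z ≠ 0 := sub_ne_zero.mpr (Ne.symm hz1)
    have hzN : z ^ N = -1 := by
      rw [hz, ← Complex.exp_nat_mul]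
      have harg : (N:ℂ) * (Complex.I * (Real.pi:ℂ) * (2*(n:ℂ)+1) / N) =
          ((2*n+1 : ℕ):ℂ) * ((Real.pi:ℂ) * Complex.I) := by
        push_cast; field_simp
      rw [harg, Complex.exp_nat_mul, Complex.exp_pi_mul_I]
      exact Odd.neg_one_pow ⟨n, by ring⟩
    have hgeom : (∑ k ∈ Finset.range N, z ^ k) * (1 - z) = 2 := by
      have h := geom_sum_mul z N
      rw [hzN] at h
      linear_combination -h
    have hsum : ∑ k ∈ Finset.range N,
        Complex.exp (Complex.I * (Real.pi:ℂ) * (2*(n:ℂ)+1) * (((k:ℤ) - t : ℤ):ℂ) / N) / 2 =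
        (Complex.exp (-Complex.I * (Real.pi : ℂ) * (2 * (n : ℂ) + 1) * (t:ℂ) / (N : ℂ)) *
          ∑ k ∈ Finset.range N, z ^ k) / 2 := by
      rw [Finset.mul_sum, Finset.sum_div]
      refine Finset.sum_congr rfl fun k _ => ?_
      congr 1
      rw [hz, ← Complex.exp_nat_mul, ← Complex.exp_add]
      congr 1
      push_cast
      field_simp
      ring
    rw [hsum, div_eq_div_iff hzden two_ne_zero]
    linear_combination -Complex.exp (-Complex.I * (Real.pi : ℂ) * (2 * (n : ℂ) + 1) * (t:ℂ) / (N : ℂ)) * hgeom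
  rw [Finset.sum_congr rfl hterm, Finset.sum_comm]
  have hinner : ∀ k ∈ Finset.range N,
      ∑ n ∈ Finset.range N,
        Complex.exp (Complex.I * (Real.pi:ℂ) * (2*(n:ℂ)+1) * (((k:ℤ) - t : ℤ):ℂ) / N) / 2 =
      (if (N:ℤ) ∣ ((k:ℤ) - t) then ((-1:ℂ))^(((k:ℤ) - t) / (N:ℤ)) * N else 0) / 2 := by
    intro k _
    rw [← Finset.sum_div, sum_exp_odd_freq hN0]
  rw [Finset.sum_congr rfl hinner]
  by_cases hle : t₂ ≤ t₁
  · rw [if_pos hle]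
    rw [Finset.sum_eq_single_of_mem (t₁ - t₂) (Finset.mem_range.mpr (by omega))]
    · have h0 : (((t₁ - t₂ : ℕ):ℤ) - t) = 0 := by omega
      rw [h0]
      simp
    · intro k hk hne
      rw [if_neg, zero_div]
      rintro ⟨q, hq⟩
      have hkN : k < N := Finset.mem_range.mp hk
      rcases int_dvd_window (by exact_mod_cast hN0) hq (by omega) (by omega) with h|h
      · omega
      · omega
  · rw [if_neg hle]
    push_neg at hle
    rw [Finset.sum_eq_single_of_mem (N - (t₂ - t₁)) (Finset.mem_range.mpr (by omega))]
    · have h0 : (((N - (t₂ - t₁) : ℕ):ℤ) - t) = (N:ℤ) := by omega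
      rw [h0, if_pos ⟨1, by ring⟩, Int.ediv_self hNZ]
      simp
      ring
    · intro k hk hne
      rw [if_neg, zero_div]
      rintro ⟨q, hq⟩
      have hkN : k < N := Finset.mem_range.mp hk
      rcases int_dvd_window (by exact_mod_cast hN0) hq (by omega) (by omega) with h|h
      · omega
      · omega
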